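/- Φ and Φ₂ have the same orbits up to time reparametrization: Φ(s(t,x), x) = Φ₂(t,x) where s(t,x) = ∫₀^t ⟨Φ₂(u,x) A, 1⟩ du, and t ↦ s(t,x) is strictly increasing. -/

import Mathlib

open NormedSpace Set
open scoped NNReal

section Stmt14Aux

/-- The vector field of the replicator-like flow. -/
noncomputable def stmt14hfun {d : ℕ} (A : Matrix (Fin d) (Fin d) ℝ) (y : Fin d → ℝ) :
    Fin d → ℝ :=
  fun j => Matrix.vecMul y A j / (∑ k, Matrix.vecMul y A k) - y j

lemma stmt14hfun_lipschitz {d : ℕ} (A : Matrix (Fin d) (Fin d) ℝ)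
    (hpos : ∀ y ∈ stdSimplex ℝ (Fin d), 0 < ∑ k, Matrix.vecMul y A k) :
    ∃ K : ℝ≥0, LipschitzOnWith K (stmt14hfun A) (stdSimplex ℝ (Fin d)) := by
  classical
  set O : Set (Fin d → ℝ) := {y | 0 < ∑ k, Matrix.vecMul y A k} with hO
  let g : (Fin d → ℝ) →L[ℝ] (Fin d → ℝ) :=
    LinearMap.toContinuousLinearMap
    { toFun := fun y => Matrix.vecMul y A
      map_add' := fun y z => by simp [Matrix.add_vecMul]
      map_smul' := fun c y => by simp [Matrix.smul_vecMul] }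
  let S : (Fin d → ℝ) →L[ℝ] ℝ :=
    LinearMap.toContinuousLinearMap
    { toFun := fun y => ∑ k, Matrix.vecMul y A k
      map_add' := fun y z => by simp [Matrix.add_vecMul, Finset.sum_add_distrib]
      map_smul' := fun c y => by simp [Matrix.smul_vecMul, Finset.mul_sum] }
  have hOopen : IsOpen O := isOpen_lt continuous_const S.continuous
  have hsub : stdSimplex ℝ (Fin d) ⊆ O := fun y hy => hpos y hy
  have heq : ∀ y, stmt14hfun A y = (S y)⁻¹ • g y - y := by
    intro y
    funext j
    simp [stmt14hfun, g, S, div_eq_inv_mul]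
  have hcd : ContDiffOn ℝ 1 (stmt14hfun A) O := by
    have h1 : ContDiffOn ℝ 1 (fun y : Fin d → ℝ => (S y)⁻¹ • g y - y) O := by
      apply ContDiffOn.sub
      · exact ContDiffOn.smul ((S.contDiff.contDiffOn).inv fun y hy => ne_of_gt hy)
          (g.contDiff.contDiffOn)
      · exact contDiff_id.contDiffOn
    exact h1.congr fun y _ => heq y
  have hfderiv : ContinuousOn (fun y => fderiv ℝ (stmt14hfun A) y) O :=
    hcd.continuousOn_fderiv_of_isOpen hOopen le_rfl
  obtain ⟨C, hC⟩ := (isCompact_stdSimplex ℝ (Fin d)).exists_bound_of_continuousOn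
    (hfderiv.mono hsub)
  refine ⟨⟨max C 0, le_max_right _ _⟩, ?_⟩
  apply (convex_stdSimplex ℝ (Fin d)).lipschitzOnWith_of_nnnorm_fderiv_le
    (fun y hy => (hcd.contDiffAt (hOopen.mem_nhds (hsub hy))).differentiableAt one_ne_zero)
  intro y hy
  have := hC y hy
  show ‖fderiv ℝ (stmt14hfun A) y‖ ≤ max C 0
  exact le_trans this (le_max_left _ _)

section withinst
attribute [local instance] Matrix.linftyOpNormedRing Matrix.linftyOpNormedAlgebra

/-- entry evaluation as a continuous linear map (linfty norm) -/
noncomputable def stmt14entryCLM {d : ℕ} (i j : Fin d) :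
    Matrix (Fin d) (Fin d) ℝ →L[ℝ] ℝ :=
  LinearMap.toContinuousLinearMap
    { toFun := fun M => M i j
      map_add' := fun _ _ => rfl
      map_smul' := fun _ _ => rfl }

lemma stmt14pow_entry_nonneg {d : ℕ} {A : Matrix (Fin d) (Fin d) ℝ}
    (hA : ∀ i j, 0 ≤ A i j) : ∀ (n : ℕ) (i j : Fin d), 0 ≤ (A ^ n) i j := by
  intro n
  induction n with
  | zero => intro i j; simp [pow_zero, Matrix.one_apply]; positivity
  | succ n ih =>
    intro i j
    rw [pow_succ, Matrix.mul_apply]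
    exact Finset.sum_nonneg fun k _ => mul_nonneg (ih i k) (hA k j)

lemma stmt14exp_entry_nonneg {d : ℕ} {A : Matrix (Fin d) (Fin d) ℝ}
    (hA : ∀ i j, 0 ≤ A i j) (i j : Fin d) : 0 ≤ exp A i j := by
  have h1 : exp A i j = ∑' n : ℕ, (n.factorial : ℝ)⁻¹ * (A ^ n) i j := by
    rw [exp_eq_tsum (𝕂 := ℝ)]
    have := (stmt14entryCLM i j).map_tsum (expSeries_summable' (𝕂 := ℝ) A)
    exact this
  rw [h1]
  exact tsum_nonneg fun n => mul_nonneg (by positivity) (stmt14pow_entry_nonneg hA n i j)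

lemma stmt14exp_mul_exp_neg {d : ℕ} (M : Matrix (Fin d) (Fin d) ℝ) :
    exp M * exp (-M) = 1 := by
  rw [← Matrix.exp_add_of_commute M (-M) (Commute.neg_right rfl), add_neg_cancel, exp_zero]

lemma stmt14vecMul_exp_deriv {d : ℕ} (A : Matrix (Fin d) (Fin d) ℝ) (x : Fin d → ℝ)
    (j : Fin d) (t : ℝ) :
    HasDerivAt (fun u : ℝ => Matrix.vecMul x (exp (u • A)) j)
      (Matrix.vecMul (Matrix.vecMul x (exp (t • A))) A j) t := by
  let L : Matrix (Fin d) (Fin d) ℝ →L[ℝ] ℝ :=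
    LinearMap.toContinuousLinearMap
      { toFun := fun M => Matrix.vecMul x M j
        map_add' := fun M N => by
          simp [Matrix.vecMul, dotProduct, mul_add, Finset.sum_add_distrib]
        map_smul' := fun c M => by
          simp only [Matrix.vecMul, dotProduct, Matrix.smul_apply, smul_eq_mul,
            RingHom.id_apply, Finset.mul_sum]
          exact Finset.sum_congr rfl fun k _ => by ring }
  have hL : ∀ M, L M = Matrix.vecMul x M j := fun M => rfl
  have := L.hasFDerivAt.comp_hasDerivAt t (hasDerivAt_exp_smul_const A t)
  rw [Matrix.vecMul_vecMul]; exact this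

end withinst

end Stmt14Aux

/-- Φ and Φ₂ have the same orbits up to reparametrization: Φ(s(t,x),x) = Φ₂(t,x) with
s(t,x) = ∫₀ᵗ ⟨Φ₂(u,x)A, 1⟩ du, and t ↦ s(t,x) is strictly increasing. -/
theorem stmt14 {d : ℕ} (hd : 2 ≤ d) (A : Matrix (Fin d) (Fin d) ℝ)
    (hAnn : ∀ i j, 0 ≤ A i j)
    (hApos : ∀ y : Fin d → ℝ, (∀ i, 0 ≤ y i) → y ≠ 0 → 0 < ∑ j, Matrix.vecMul y A j)
    (Φ : ℝ → (Fin d → ℝ) → Fin d → ℝ)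
    (hΦ0 : ∀ y, Φ 0 y = y)
    (hΦΔ : ∀ y : Fin d → ℝ, ((∀ i, 0 ≤ y i) ∧ ∑ i, y i = 1) → ∀ t : ℝ, 0 ≤ t →
      (∀ i, 0 ≤ Φ t y i) ∧ ∑ i, Φ t y i = 1)
    (hode : ∀ y : Fin d → ℝ, ((∀ i, 0 ≤ y i) ∧ ∑ i, y i = 1) → ∀ t : ℝ, 0 ≤ t →
      HasDerivAt (fun u => Φ u y)
        (fun j => Matrix.vecMul (Φ t y) A j / (∑ k, Matrix.vecMul (Φ t y) A k) - Φ t y j) t)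
    (x : Fin d → ℝ) (hx : ∀ i, 0 ≤ x i) (hx1 : ∑ i, x i = 1)
    (Φ₂ : ℝ → Fin d → ℝ)
    (hΦ₂ : ∀ t j, Φ₂ t j = Matrix.vecMul x (NormedSpace.exp (t • A)) j /
        ∑ k, Matrix.vecMul x (NormedSpace.exp (t • A)) k)
    (s : ℝ → ℝ)
    (hs : ∀ t, s t = ∫ u in (0 : ℝ)..t, ∑ j, Matrix.vecMul (Φ₂ u) A j) :
    StrictMonoOn s (Set.Ici 0) ∧ ∀ t : ℝ, 0 ≤ t → Φ (s t) x = Φ₂ t := by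
  classical
  -- basic abbreviations
  set w : ℝ → Fin d → ℝ := fun t => Matrix.vecMul x (exp (t • A)) with hwdef
  set S : ℝ → ℝ := fun t => ∑ k, w t k with hSdef
  set c : ℝ → ℝ := fun u => ∑ j, Matrix.vecMul (Φ₂ u) A j with hcdef
  have hx0 : x ≠ 0 := by
    intro h
    rw [h] at hx1
    simp at hx1
  -- nonnegativity of w for t ≥ 0
  have hwnn : ∀ t : ℝ, 0 ≤ t → ∀ j, 0 ≤ w t j := by
    intro t ht j
    have hexp : ∀ i j, 0 ≤ exp (t • A) i j :=
      stmt14exp_entry_nonneg (fun i j => by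
        have : (t • A) i j = t * A i j := rfl
        rw [this]; exact mul_nonneg ht (hAnn i j))
    show 0 ≤ Matrix.vecMul x (exp (t • A)) j
    rw [Matrix.vecMul, dotProduct]
    exact Finset.sum_nonneg fun i _ => mul_nonneg (hx i) (hexp i j)
  -- w is never zero
  have hwne : ∀ t : ℝ, w t ≠ 0 := by
    intro t h
    apply hx0
    have h1 : Matrix.vecMul (w t) (exp (-(t • A))) = x := by
      show Matrix.vecMul (Matrix.vecMul x (exp (t • A))) (exp (-(t • A))) = x
      rw [Matrix.vecMul_vecMul, stmt14exp_mul_exp_neg, Matrix.vecMul_one]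
    rw [← h1, h, Matrix.zero_vecMul]
  -- positivity of the normalization
  have hSpos : ∀ t : ℝ, 0 ≤ t → 0 < S t := by
    intro t ht
    have hex : ∃ k, 0 < w t k := by
      by_contra hcon
      push_neg at hcon
      exact hwne t (funext fun k => le_antisymm (hcon k) (hwnn t ht k))
    obtain ⟨k, hk⟩ := hex
    exact Finset.sum_pos' (fun k _ => hwnn t ht k) ⟨k, Finset.mem_univ k, hk⟩
  have hΦ₂' : ∀ t j, Φ₂ t j = w t j / S t := fun t j => hΦ₂ t j
  -- Φ₂ stays in the simplex
  have hΦ₂mem : ∀ t : ℝ, 0 ≤ t → Φ₂ t ∈ stdSimplex ℝ (Fin d) := by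
    intro t ht
    constructor
    · intro j
      rw [hΦ₂' t j]
      exact div_nonneg (hwnn t ht j) (hSpos t ht).le
    · have : ∑ j, Φ₂ t j = (∑ j, w t j) / S t := by
        rw [Finset.sum_div]
        exact Finset.sum_congr rfl fun j _ => hΦ₂' t j
      rw [this]
      exact div_self (ne_of_gt (hSpos t ht))
  have hΦ₂ne : ∀ t : ℝ, 0 ≤ t → Φ₂ t ≠ 0 := by
    intro t ht h
    have := (hΦ₂mem t ht).2
    rw [h] at this
    simp at this
  have hcpos : ∀ t : ℝ, 0 ≤ t → 0 < c t := fun t ht =>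
    hApos (Φ₂ t) (hΦ₂mem t ht).1 (hΦ₂ne t ht)
  -- continuity of w and S
  have hwcont : ∀ j, Continuous fun t => w t j := fun j =>
    continuous_iff_continuousAt.2 fun t => (stmt14vecMul_exp_deriv A x j t).continuousAt
  have hScont : Continuous S := by
    apply continuous_finset_sum
    exact fun k _ => hwcont k
  -- continuity of c wherever S > 0
  have hcformula : ∀ u, c u = ∑ j, ∑ i, (w u i / S u) * A i j := by
    intro u
    rw [hcdef]
    refine Finset.sum_congr rfl fun j _ => ?_
    rw [Matrix.vecMul, dotProduct]
    exact Finset.sum_congr rfl fun i _ => by rw [hΦ₂' u i]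
  have hceq : c = fun u => ∑ j, ∑ i, (w u i / S u) * A i j := funext hcformula
  have hccont : ∀ t : ℝ, 0 < S t → ContinuousAt c t := by
    intro t ht
    rw [hceq]
    exact tendsto_finset_sum _ fun j _ => tendsto_finset_sum _ fun i _ =>
      (((hwcont i).continuousAt).div hScont.continuousAt (ne_of_gt ht)).mul continuousAt_const
  -- derivative of s
  have hInt : ∀ a b : ℝ, 0 ≤ a → a ≤ b → IntervalIntegrable c MeasureTheory.volume a b := by
    intro a b ha hab
    apply ContinuousOn.intervalIntegrable
    intro u hu
    rw [Set.uIcc_of_le hab] at hu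
    exact (hccont u (hSpos u (le_trans ha hu.1))).continuousWithinAt
  have hsder : ∀ t : ℝ, 0 ≤ t → HasDerivAt s (c t) t := by
    intro t ht
    have hmeas : StronglyMeasurableAtFilter c (nhds t) := by
      exact ContinuousAt.stronglyMeasurableAtFilter (μ := MeasureTheory.volume)
        (isOpen_lt continuous_const hScont) (fun u hu => hccont u hu) t (hSpos t ht)
    have h1 : HasDerivAt (fun u => ∫ v in (0:ℝ)..u, c v) (c t) t :=
      intervalIntegral.integral_hasDerivAt_right (hInt 0 t le_rfl ht) hmeas
        (hccont t (hSpos t ht))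
    have hse : s = fun u => ∫ v in (0:ℝ)..u, c v := funext hs
    rw [hse]
    exact h1
  have hs0 : s 0 = 0 := by rw [hs]; simp
  -- strict monotonicity
  have hmono : StrictMonoOn s (Set.Ici 0) := by
    intro a ha b hb hab
    have ha' : (0:ℝ) ≤ a := ha
    have hb' : (0:ℝ) ≤ b := hb
    have h2 : 0 < ∫ u in a..b, c u :=
      intervalIntegral.intervalIntegral_pos_of_pos_on (hInt a b ha' hab.le)
        (fun u hu => hcpos u (le_trans ha' hu.1.le)) hab
    have h3 : s b - s a = ∫ u in a..b, c u := by
      rw [hs, hs]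
      exact intervalIntegral.integral_interval_sub_left (hInt 0 b le_rfl hb')
        (hInt 0 a le_rfl ha')
    linarith
  have hsnn : ∀ t : ℝ, 0 ≤ t → 0 ≤ s t := by
    intro t ht
    rcases eq_or_lt_of_le ht with h | h
    · rw [← h, hs0]
    · have := hmono (le_refl (0:ℝ)) (le_of_lt h) h
      rw [hs0] at this
      exact this.le
  -- derivative of Φ₂
  have hBpos : ∀ t : ℝ, 0 ≤ t → 0 < ∑ k, Matrix.vecMul (w t) A k := fun t ht =>
    hApos (w t) (hwnn t ht) (hwne t)
  have hvecΦ₂ : ∀ t : ℝ, ∀ j, Matrix.vecMul (Φ₂ t) A j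
      = Matrix.vecMul (w t) A j / S t := by
    intro t j
    rw [Matrix.vecMul, dotProduct, Matrix.vecMul, dotProduct, Finset.sum_div]
    refine Finset.sum_congr rfl fun i _ => ?_
    rw [hΦ₂' t i]
    ring
  have hΦ₂deriv : ∀ t : ℝ, 0 ≤ t →
      HasDerivAt Φ₂ (c t • stmt14hfun A (Φ₂ t)) t := by
    intro t ht
    rw [hasDerivAt_pi]
    intro j
    have hwd : HasDerivAt (fun u => w u j) (Matrix.vecMul (w t) A j) t :=
      stmt14vecMul_exp_deriv A x j t
    have hSd : HasDerivAt S (∑ k, Matrix.vecMul (w t) A k) t := by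
      rw [hSdef]
      exact HasDerivAt.fun_sum fun k _ => stmt14vecMul_exp_deriv A x k t
    have hdiv := hwd.div hSd (ne_of_gt (hSpos t ht))
    have hfe : (fun u => Φ₂ u j) = fun u => w u j / S u := funext fun u => hΦ₂' u j
    rw [hfe]
    convert hdiv using 1
    case e'_4 => rfl
    case e'_8 => rfl
    have hS := hSpos t ht
    have hB := hBpos t ht
    have hct : c t = (∑ k, Matrix.vecMul (w t) A k) / S t := by
      simp only [hcdef]
      rw [Finset.sum_div]
      exact Finset.sum_congr rfl fun k _ => hvecΦ₂ t k
    have hsum : (∑ k, Matrix.vecMul (Φ₂ t) A k) = (∑ k, Matrix.vecMul (w t) A k) / S t := by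
      rw [Finset.sum_div]
      exact Finset.sum_congr rfl fun k _ => hvecΦ₂ t k
    show c t • (stmt14hfun A (Φ₂ t) j) = _
    rw [smul_eq_mul]
    show c t * (Matrix.vecMul (Φ₂ t) A j / (∑ k, Matrix.vecMul (Φ₂ t) A k) - Φ₂ t j) = _
    rw [hct, hvecΦ₂ t j, hΦ₂' t j, hsum]
    field_simp
  have hΦ₂cont : ∀ t : ℝ, 0 ≤ t → ContinuousAt Φ₂ t := fun t ht => (hΦ₂deriv t ht).continuousAt
  have hinit : Φ (s 0) x = Φ₂ 0 := by
    rw [hs0, hΦ0]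
    funext j
    rw [hΦ₂ 0 j]
    simp [hx1]
  -- uniqueness of ODE solutions
  have main : ∀ T : ℝ, 0 ≤ T → Φ (s T) x = Φ₂ T := by
    intro T hT
    obtain ⟨K, hK⟩ := stmt14hfun_lipschitz A (fun y hy => hApos y hy.1 (by
      intro h
      have := hy.2
      rw [h] at this
      simpa using this))
    obtain ⟨M, hM⟩ := isCompact_Icc.exists_bound_of_continuousOn (s := Set.Icc (0:ℝ) T)
      (fun u hu => (hccont u (hSpos u hu.1)).continuousWithinAt)
    set π : ℝ → ℝ := fun t => max 0 (min t T) with hπdef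
    have hπmem : ∀ t, π t ∈ Set.Icc (0:ℝ) T := fun t =>
      ⟨le_max_left _ _, max_le hT (min_le_right _ _)⟩
    set v : ℝ → (Fin d → ℝ) → (Fin d → ℝ) := fun t y => c (π t) • stmt14hfun A y with hvdef
    have hvlip : ∀ t, LipschitzOnWith (Real.toNNReal M * K) (v t) (stdSimplex ℝ (Fin d)) := by
      intro t y hy z hz
      have h1 : edist (v t y) (v t z)
          = (‖c (π t)‖₊ : ENNReal) * edist (stmt14hfun A y) (stmt14hfun A z) := by
        simp only [hvdef]
        rw [edist_smul₀, ENNReal.smul_def, smul_eq_mul]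
      have h2 : ‖c (π t)‖₊ ≤ Real.toNNReal M := by
        rw [← NNReal.coe_le_coe, coe_nnnorm, Real.coe_toNNReal']
        exact le_trans (hM (π t) (hπmem t)) (le_max_left _ _)
      calc edist (v t y) (v t z)
          = (‖c (π t)‖₊ : ENNReal) * edist (stmt14hfun A y) (stmt14hfun A z) := h1
        _ ≤ (‖c (π t)‖₊ : ENNReal) * ((K : ENNReal) * edist y z) := by
            gcongr
            exact hK hy hz
        _ ≤ ((Real.toNNReal M : ℝ≥0) : ENNReal) * ((K : ENNReal) * edist y z) :=
            mul_le_mul' (by exact_mod_cast h2) le_rfl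
        _ = ((Real.toNNReal M * K : ℝ≥0) : ENNReal) * edist y z := by
            rw [ENNReal.coe_mul]
            ring
    have hπeq : ∀ t ∈ Set.Ico (0:ℝ) T, π t = t := by
      intro t ht
      simp only [hπdef]
      rw [min_eq_left ht.2.le, max_eq_right ht.1]
    have hf' : ∀ t ∈ Set.Ico (0:ℝ) T, HasDerivWithinAt (fun u => Φ (s u) x)
        (v t (Φ (s t) x)) (Set.Ici t) t := by
      intro t ht
      have hst : 0 ≤ s t := hsnn t ht.1
      have hΦd := hode x ⟨hx, hx1⟩ (s t) hst
      have hcomp := HasDerivAt.scomp (x := t) hΦd (hsder t ht.1)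
      have hcomp' : HasDerivAt (fun u => Φ (s u) x)
          (c t • stmt14hfun A (Φ (s t) x)) t := hcomp
      have hv : v t (Φ (s t) x) = c t • stmt14hfun A (Φ (s t) x) := by
        simp only [hvdef]
        rw [hπeq t ht]
      rw [hv]
      exact hcomp'.hasDerivWithinAt
    have hg' : ∀ t ∈ Set.Ico (0:ℝ) T, HasDerivWithinAt Φ₂ (v t (Φ₂ t)) (Set.Ici t) t := by
      intro t ht
      have hv : v t (Φ₂ t) = c t • stmt14hfun A (Φ₂ t) := by
        simp only [hvdef]
        rw [hπeq t ht]
      rw [hv]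
      exact (hΦ₂deriv t ht.1).hasDerivWithinAt
    have hfs : ∀ t ∈ Set.Ico (0:ℝ) T, Φ (s t) x ∈ stdSimplex ℝ (Fin d) := fun t ht =>
      ⟨(hΦΔ x ⟨hx, hx1⟩ (s t) (hsnn t ht.1)).1, (hΦΔ x ⟨hx, hx1⟩ (s t) (hsnn t ht.1)).2⟩
    have hgs : ∀ t ∈ Set.Ico (0:ℝ) T, Φ₂ t ∈ stdSimplex ℝ (Fin d) := fun t ht =>
      hΦ₂mem t ht.1
    have hfcont : ContinuousOn (fun u => Φ (s u) x) (Set.Icc 0 T) := by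
      intro t ht
      have h1 : ContinuousAt (fun u => Φ u x) (s t) :=
        (hode x ⟨hx, hx1⟩ (s t) (hsnn t ht.1)).continuousAt
      exact (h1.comp (hsder t ht.1).continuousAt).continuousWithinAt
    have hgcont : ContinuousOn Φ₂ (Set.Icc 0 T) := fun t ht =>
      (hΦ₂cont t ht.1).continuousWithinAt
    have heqOn := ODE_solution_unique_of_mem_Icc_right (fun t _ => hvlip t) hfcont hf' hfs hgcont hg' hgs hinit
    exact heqOn ⟨hT, le_rfl⟩
  exact ⟨hmono, main⟩
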